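/- Let {(B_m,G_m)}_{m=1}^M be a deterministic tiling of [T]×[p], let ε ∈ R^{T×p} satisfy H_0 (jointly independent columns) and local exchangeability with respect to the tiling, and let H_m ∈ R^{|G_m|×|G_m|} be deterministic matrices. Define the mosaic tile residuals ε̂_{(m)} := ε_{(m)} H_m for m ∈ [M]. Then for all deterministic permutation matrices P_1 ∈ R^{|B_1|×|B_1|},…,P_M ∈ R^{|B_M|×|B_M|}, the tuple (ε̂_{(1)},…,ε̂_{(M)}) has the same joint distribution as (P_1 ε̂_{(1)},…,P_M ε̂_{(M)}). -/

import Mathlib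

open MeasureTheory ProbabilityTheory Set

lemma map_fun_eq_of_iIndepFun {Ω ι : Type*} [Fintype ι] [MeasurableSpace Ω]
    {μ : Measure Ω} [IsProbabilityMeasure μ] {β : ι → Type*} [∀ i, MeasurableSpace (β i)]
    {f g : ∀ i, Ω → β i}
    (hf : iIndepFun f μ)
    (hg : iIndepFun g μ)
    (hfm : ∀ i, Measurable (f i)) (hgm : ∀ i, Measurable (g i))
    (h : ∀ i, μ.map (f i) = μ.map (g i)) :
    μ.map (fun ω i => f i ω) = μ.map (fun ω i => g i ω) := by
  have key : ∀ (F : ∀ i, Ω → β i), iIndepFun F μ →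
      (∀ i, Measurable (F i)) →
      Measure.pi (fun i => μ.map (F i)) = μ.map (fun ω i => F i ω) := by
    intro F hF hFm
    have hFmeas : Measurable (fun ω i => F i ω) := measurable_pi_lambda _ hFm
    refine Measure.pi_eq fun s hs => ?_
    rw [Measure.map_apply hFmeas (MeasurableSet.univ_pi hs)]
    have hpre : (fun ω i => F i ω) ⁻¹' (Set.pi univ s) = ⋂ i, F i ⁻¹' s i := by
      ext ω; simp [Set.mem_pi]
    rw [hpre]
    have := hF.measure_inter_preimage_eq_mul (S := Finset.univ) (sets := s)
      (fun i _ => hs i)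
    simp only [Finset.mem_univ, Set.iInter_true] at this
    rw [this]
    exact Finset.prod_congr rfl fun i _ => (Measure.map_apply (hFm i) (hs i)).symm
  rw [← key f hf hfm, ← key g hg hgm]
  congr 1
  ext i : 1
  exact h i

/-- For a deterministic tiling `{(B m, G m)}` of `[T] × [p]`, a random
matrix `ε` whose columns are jointly independent (`H₀`) and which is locally exchangeable with
respect to the tiling, and deterministic matrices `H m ∈ ℝ^{|G m| × |G m|}`, the mosaic tile
residuals `ε̂_(m) := ε_(m) H_m` satisfy
`(ε̂_(1), …, ε̂_(M)) ≍ (P₁ ε̂_(1), …, P_M ε̂_(M))` for all deterministic permutation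
matrices `P m` (encoded as within-tile row permutations `σ m`). -/
theorem mosaic_tile_residuals_within_tile_permutation_invariance
    {Ω : Type*} [MeasurableSpace Ω] (μ : Measure Ω) [IsProbabilityMeasure μ]
    (T p M : ℕ) (ε : Ω → Fin T → Fin p → ℝ) (hmeas : Measurable ε)
    -- the tiling: every `(t, j)` lies in exactly one rectangle `B m × G m`,
    -- namely the one indexed by `tile t j`:
    (B : Fin M → Finset (Fin T)) (G : Fin M → Finset (Fin p))
    (tile : Fin T → Fin p → Fin M)
    (hB : ∀ t j, t ∈ B (tile t j)) (hG : ∀ t j, j ∈ G (tile t j))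
    (huniq : ∀ m t j, t ∈ B m → j ∈ G m → m = tile t j)
    -- `H₀`: the columns of `ε` are jointly independent:
    (hcol_indep : iIndepFun (fun j ω => fun t => ε ω t j) μ)
    -- local exchangeability of `ε` with respect to the tiling:
    (hlocexch : ∀ (j : Fin p) (π : Equiv.Perm (Fin T)), (∀ t, tile (π t) j = tile t j) →
      Measure.map (fun ω => fun t => ε ω (π t) j) μ =
        Measure.map (fun ω => fun t => ε ω t j) μ)
    -- deterministic matrices `H m` and the mosaic tile residuals `ε̂_(m) := ε_(m) H_m`:
    (H : (m : Fin M) → Matrix {j : Fin p // j ∈ G m} {j : Fin p // j ∈ G m} ℝ)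
    (εh : (m : Fin M) → Ω → {t : Fin T // t ∈ B m} → {j : Fin p // j ∈ G m} → ℝ)
    (hεh : ∀ m ω t j, εh m ω t j = ∑ j' : {x : Fin p // x ∈ G m}, ε ω t.1 j'.1 * H m j' j) :
    ∀ σ : (m : Fin M) → Equiv.Perm {t : Fin T // t ∈ B m},
      Measure.map (fun ω => fun (m : Fin M) => fun t j => εh m ω t j) μ =
      Measure.map (fun ω => fun (m : Fin M) => fun t j => εh m ω (σ m t) j) μ := by
  intro σ
  classical
  -- a helper to move along equalities of tile indices
  have aux : ∀ (m m' : Fin M) (h : m' = m) (e : ∀ k, {t : Fin T // t ∈ B k} → {t : Fin T // t ∈ B k})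
      (x : Fin T) (hx : x ∈ B m'), (e m' ⟨x, hx⟩).1 = (e m ⟨x, h ▸ hx⟩).1 := by
    rintro m m' rfl e x hx; rfl
  -- for each column j, the within-tile permutation of rows, as a permutation of Fin T
  have tile_stable : ∀ (e : ∀ k, Equiv.Perm {t : Fin T // t ∈ B k}) (j : Fin p) (t : Fin T),
      tile ((e (tile t j) ⟨t, hB t j⟩).1) j = tile t j := by
    intro e j t
    exact (huniq (tile t j) _ j ((e (tile t j) ⟨t, hB t j⟩).2) (hG t j)).symm
  set f : Fin p → Fin T → Fin T := fun j t => ((σ (tile t j)) ⟨t, hB t j⟩).1 with hf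
  set g : Fin p → Fin T → Fin T := fun j t => ((σ (tile t j)).symm ⟨t, hB t j⟩).1 with hg
  have hfg : ∀ j t, g j (f j t) = t := by
    intro j t
    have hk : tile (f j t) j = tile t j := tile_stable (fun k => σ k) j t
    have := aux (tile t j) (tile (f j t) j) hk (fun k => (σ k).symm) (f j t) (hB (f j t) j)
    simp only [hg]
    rw [this]
    have hsub : (⟨f j t, hk ▸ hB (f j t) j⟩ : {s : Fin T // s ∈ B (tile t j)}) =
        (σ (tile t j)) ⟨t, hB t j⟩ := Subtype.ext rfl
    rw [hsub, Equiv.symm_apply_apply]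
  have hgf : ∀ j t, f j (g j t) = t := by
    intro j t
    have hk : tile (g j t) j = tile t j := by
      exact (huniq (tile t j) _ j (((σ (tile t j)).symm ⟨t, hB t j⟩).2) (hG t j)).symm
    have := aux (tile t j) (tile (g j t) j) hk (fun k => σ k) (g j t) (hB (g j t) j)
    simp only [hf]
    rw [this]
    have hsub : (⟨g j t, hk ▸ hB (g j t) j⟩ : {s : Fin T // s ∈ B (tile t j)}) =
        (σ (tile t j)).symm ⟨t, hB t j⟩ := Subtype.ext rfl
    rw [hsub, Equiv.apply_symm_apply]
  set π : Fin p → Equiv.Perm (Fin T) := fun j =>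
    ⟨f j, g j, fun t => hfg j t, fun t => hgf j t⟩ with hπ
  -- column maps
  set X : Fin p → Ω → Fin T → ℝ := fun j ω t => ε ω t j with hX
  set Y : Fin p → Ω → Fin T → ℝ := fun j ω t => ε ω (π j t) j with hY
  have hXm : ∀ j, Measurable (X j) := fun j =>
    measurable_pi_lambda _ fun t => hmeas.eval.eval
  have hYm : ∀ j, Measurable (Y j) := fun j =>
    measurable_pi_lambda _ fun t => hmeas.eval.eval
  have hXindep : iIndepFun X μ := hcol_indep
  have hYindep : iIndepFun Y μ := by
    have := hXindep.comp (fun j (c : Fin T → ℝ) => fun t => c (π j t))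
      (fun j => measurable_pi_lambda _ fun t => measurable_pi_apply _)
    exact this
  have hmarg : ∀ j, μ.map (Y j) = μ.map (X j) := by
    intro j
    exact hlocexch j (π j) (fun t => tile_stable (fun k => σ k) j t)
  -- equality of joint laws of the column tuples
  have hjoint : μ.map (fun ω j => Y j ω) = μ.map (fun ω j => X j ω) :=
    map_fun_eq_of_iIndepFun hYindep hXindep hYm hXm hmarg
  -- the deterministic post-processing map
  set F : (Fin p → Fin T → ℝ) → ((m : Fin M) → {t : Fin T // t ∈ B m} → {j : Fin p // j ∈ G m} → ℝ) :=
    fun x m t j => ∑ j' : {x : Fin p // x ∈ G m}, x j'.1 t.1 * H m j' j with hF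
  have hFm : Measurable F := by
    apply measurable_pi_lambda; intro m
    apply measurable_pi_lambda; intro t
    apply measurable_pi_lambda; intro j
    apply Finset.measurable_sum
    intro j' _
    exact (((measurable_pi_apply t.1).comp (measurable_pi_apply j'.1))).mul_const _
  have hXtuple : Measurable (fun ω j => X j ω) := measurable_pi_lambda _ hXm
  have hYtuple : Measurable (fun ω j => Y j ω) := measurable_pi_lambda _ hYm
  have hLHS : (fun ω => fun (m : Fin M) => fun t j => εh m ω t j) =
      F ∘ (fun ω j => X j ω) := by
    funext ω; funext m; funext t; funext j
    simp only [Function.comp, hF, hX]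
    rw [hεh]
  have hRHS : (fun ω => fun (m : Fin M) => fun t j => εh m ω (σ m t) j) =
      F ∘ (fun ω j => Y j ω) := by
    funext ω; funext m; funext t; funext j
    simp only [Function.comp, hF, hY]
    rw [hεh]
    refine Finset.sum_congr rfl fun j' _ => ?_
    congr 1
    -- show ε ω (σ m t).1 j' = ε ω (π j' t.1) j'
    have hm : tile t.1 j'.1 = m := (huniq m t.1 j'.1 t.2 j'.2).symm
    have : (π j' t.1 : Fin T) = ((σ m) t).1 := by
      simp only [hπ, Equiv.coe_fn_mk, hf]
      have := aux m (tile t.1 j'.1) hm (fun k => σ k) t.1 (hB t.1 j'.1)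
      rw [this]
    rw [this]
  rw [hLHS, hRHS,
    ← Measure.map_map hFm hXtuple, ← Measure.map_map hFm hYtuple, hjoint]
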